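/- arXiv:2503.24197 — 3 statements merged into one kernel-verified Lean document; each statement's English description precedes it below -/
import Mathlib

section
/- Let d ≥ 1, let (μ_n) be a sequence of Borel probability measures on C([0,1], ℝ^d), and let μ be a Borel probability measure on C([0,1], ℝ^d). Assume: (i) for every c ∈ ℝ^d, the pushforward measures of μ_n under the continuous map f ↦ (t ↦ ⟨c, f(t)⟩) ∈ C([0,1], ℝ) converge weakly to the corresponding pushforward of μ; and (ii) for every k ≥ 1 and all times t_1, …, t_k ∈ [0,1], the pushforward measures of μ_n under the map f ↦ (f(t_1), …, f(t_k)) ∈ ℝ^{dk} converge weakly to the corresponding pushforward of μ (convergence of finite-dimensional distributions). Then μ_n converges weakly to μ on C([0,1], ℝ^d). -/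
open MeasureTheory Filter Topology BoundedContinuousFunction

/-- Borel σ-algebra on a space of continuous maps (equipped with the compact-open, i.e.
uniform-on-compacts, topology). -/
noncomputable instance continuousMapMeasurableSpace
    {X Y : Type*} [TopologicalSpace X] [TopologicalSpace Y] :
    MeasurableSpace C(X, Y) := borel _

instance continuousMapBorelSpace {X Y : Type*} [TopologicalSpace X] [TopologicalSpace Y] :
    BorelSpace C(X, Y) := ⟨rfl⟩

/-- Weak convergence of a sequence of Borel measures on a topological space: integrals of
every bounded continuous real-valued function converge. -/
def WeakConv {E : Type*} [TopologicalSpace E] [MeasurableSpace E]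
    (μs : ℕ → Measure E) (μ : Measure E) : Prop :=
  ∀ g : BoundedContinuousFunction E ℝ,
    Tendsto (fun n => ∫ x, g x ∂(μs n)) atTop (𝓝 (∫ x, g x ∂μ))

/-- The continuous pairing `x ↦ ⟨c, x⟩` on `ℝ^d`, as a bundled continuous map. -/
noncomputable def pairingCM (d : ℕ) (c : Fin d → ℝ) : C(Fin d → ℝ, ℝ) :=
  ⟨fun x => ∑ i, c i * x i,
    continuous_finset_sum _ fun i _ => continuous_const.mul (continuous_apply i)⟩

section Minorant

variable {E : Type*} [MetricSpace E] [MeasurableSpace E] [BorelSpace E]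

set_option linter.unusedSectionVars false

/-- Lipschitz minorant of (the indicator of) an open set. -/
noncomputable def minorant (U : Set E) (m : ℕ) : BoundedContinuousFunction E ℝ :=
  ⟨⟨fun x => min 1 (m * Metric.infDist x Uᶜ),
    continuous_const.min (continuous_const.mul (Metric.continuous_infDist_pt _))⟩,
   ⟨2, fun x y => by
      have h1 : ∀ z : E, |min 1 ((m : ℝ) * Metric.infDist z Uᶜ)| ≤ 1 := by
        intro z
        rw [abs_le]
        constructor
        · exact le_trans (by norm_num) (le_min zero_le_one
            (mul_nonneg (Nat.cast_nonneg m) Metric.infDist_nonneg))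
        · exact min_le_left _ _
      calc dist (min 1 ((m : ℝ) * Metric.infDist x Uᶜ)) (min 1 ((m : ℝ) * Metric.infDist y Uᶜ))
          = |min 1 ((m : ℝ) * Metric.infDist x Uᶜ) - min 1 ((m : ℝ) * Metric.infDist y Uᶜ)| :=
            Real.dist_eq _ _
        _ ≤ _ + _ := abs_sub _ _
        _ ≤ 2 := by linarith [h1 x, h1 y]⟩⟩

@[simp] lemma minorant_apply (U : Set E) (m : ℕ) (x : E) :
    minorant U m x = min 1 ((m:ℝ) * Metric.infDist x Uᶜ) := rfl

lemma minorant_nonneg {U : Set E} {m : ℕ} (x : E) : 0 ≤ minorant U m x :=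
  le_min zero_le_one (mul_nonneg (Nat.cast_nonneg m) Metric.infDist_nonneg)

lemma minorant_abs_le {U : Set E} {m : ℕ} (x : E) : |minorant U m x| ≤ 1 := by
  rw [abs_le]
  exact ⟨le_trans (by norm_num) (minorant_nonneg x), min_le_left _ _⟩

lemma minorant_dist_le {U : Set E} {m : ℕ} (x y : E) :
    dist (minorant U m x) (minorant U m y) ≤ (m : ℝ) * dist x y := by
  have key : ∀ p q : ℝ, min 1 p - min 1 q ≤ |p - q| := by
    intro p q
    rcases le_total p q with h | h
    · have h2 : min 1 p ≤ min 1 q := min_le_min le_rfl h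
      linarith [abs_nonneg (p - q)]
    · rcases le_total q 1 with h3 | h3
      · have h4 : min 1 q = q := min_eq_right h3
        have h5 : min 1 p ≤ p := min_le_right _ _
        rw [h4]
        calc min 1 p - q ≤ p - q := by linarith
          _ ≤ |p - q| := le_abs_self _
      · have h4 : min 1 q = 1 := min_eq_left h3
        have h5 : min 1 p ≤ 1 := min_le_left _ _
        rw [h4]
        linarith [abs_nonneg (p - q)]
  have hinf : |Metric.infDist x Uᶜ - Metric.infDist y Uᶜ| ≤ dist x y := by
    have := (Metric.lipschitz_infDist_pt (Uᶜ : Set E)).dist_le_mul x y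
    rw [Real.dist_eq] at this
    simpa using this
  rw [Real.dist_eq, minorant_apply, minorant_apply]
  have h1 : |(m:ℝ) * Metric.infDist x Uᶜ - (m:ℝ) * Metric.infDist y Uᶜ| ≤ (m:ℝ) * dist x y := by
    rw [show (m:ℝ) * Metric.infDist x Uᶜ - (m:ℝ) * Metric.infDist y Uᶜ
        = (m:ℝ) * (Metric.infDist x Uᶜ - Metric.infDist y Uᶜ) by ring, abs_mul,
      abs_of_nonneg (Nat.cast_nonneg m)]
    exact mul_le_mul_of_nonneg_left hinf (Nat.cast_nonneg m)
  rw [abs_le]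
  constructor
  · have := key ((m:ℝ) * Metric.infDist y Uᶜ) ((m:ℝ) * Metric.infDist x Uᶜ)
    rw [abs_sub_comm] at this
    linarith
  · exact le_trans (key _ _) h1

lemma minorant_le_indicator {U : Set E} {m : ℕ} (x : E) :
    minorant U m x ≤ Set.indicator U (fun _ => (1:ℝ)) x := by
  by_cases hx : x ∈ U
  · rw [Set.indicator_of_mem hx]; exact min_le_left _ _
  · rw [Set.indicator_of_notMem hx]
    have : Metric.infDist x Uᶜ = 0 := Metric.infDist_zero_of_mem hx
    simp [this]

lemma integral_minorant_le {U : Set E} (hU : IsOpen U) {m : ℕ} (ν : Measure E)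
    [IsProbabilityMeasure ν] :
    ∫ x, minorant U m x ∂ν ≤ (ν U).toReal := by
  have h1 : ∫ x, Set.indicator U (fun _ => (1:ℝ)) x ∂ν = (ν U).toReal := by
    rw [integral_indicator_const (1:ℝ) hU.measurableSet]; simp; rfl
  rw [← h1]
  exact integral_mono ((minorant U m).integrable ν)
    ((integrable_const (1:ℝ)).indicator hU.measurableSet) minorant_le_indicator

lemma tendsto_integral_minorant {U : Set E} (hU : IsOpen U) (hne : Uᶜ.Nonempty)
    (ν : Measure E) [IsProbabilityMeasure ν] :
    Tendsto (fun m => ∫ x, minorant U m x ∂ν) atTop (𝓝 ((ν U).toReal)) := by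
  have h1 : ∫ x, Set.indicator U (fun _ => (1:ℝ)) x ∂ν = (ν U).toReal := by
    rw [integral_indicator_const (1:ℝ) hU.measurableSet]; simp; rfl
  rw [← h1]
  apply tendsto_integral_of_dominated_convergence (fun _ => (1:ℝ))
  · exact fun m => ((minorant U m).continuous).aestronglyMeasurable
  · exact integrable_const 1
  · intro m
    filter_upwards with x
    rw [Real.norm_eq_abs]
    exact minorant_abs_le x
  · filter_upwards with x
    by_cases hx : x ∈ U
    · rw [Set.indicator_of_mem hx]
      have hpos : 0 < Metric.infDist x Uᶜ :=
        (IsOpen.isClosed_compl hU).notMem_iff_infDist_pos hne |>.mp (by simpa using hx)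
      apply tendsto_atTop_of_eventually_const (i₀ := ⌈(Metric.infDist x Uᶜ)⁻¹⌉₊)
      intro m hm
      have : (1:ℝ) ≤ m * Metric.infDist x Uᶜ := by
        rw [← div_le_iff₀ hpos] at *
        calc (1:ℝ)/Metric.infDist x Uᶜ = (Metric.infDist x Uᶜ)⁻¹ := one_div _
          _ ≤ ⌈(Metric.infDist x Uᶜ)⁻¹⌉₊ := Nat.le_ceil _
          _ ≤ m := by exact_mod_cast hm
      simp [min_eq_left this]
    · rw [Set.indicator_of_notMem hx]
      have : Metric.infDist x Uᶜ = 0 := Metric.infDist_zero_of_mem hx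
      simp [this]

/-- If the integrals of all the minorants converge, we get an eventual lower bound on the
measures of an open set. -/
lemma eventually_lt_of_minorant_conv {νs : ℕ → Measure E} {ν : Measure E}
    [∀ n, IsProbabilityMeasure (νs n)] [IsProbabilityMeasure ν] {U : Set E}
    (h : ∀ m : ℕ, Tendsto (fun n => ∫ x, minorant U m x ∂(νs n)) atTop
      (𝓝 (∫ x, minorant U m x ∂ν)))
    (hU : IsOpen U) {b : ℝ}
    (hb : b < (ν U).toReal) : ∀ᶠ n in atTop, b < ((νs n) U).toReal := by
  by_cases hne : Uᶜ.Nonempty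
  · obtain ⟨m, hm⟩ := ((tendsto_integral_minorant hU hne ν).eventually_const_lt hb).exists
    filter_upwards [(h m).eventually_const_lt hm] with n hn
    exact lt_of_lt_of_le hn (integral_minorant_le hU (νs n))
  · have hUuniv : U = Set.univ := by
      rw [Set.not_nonempty_iff_eq_empty] at hne
      simpa [Set.compl_empty_iff] using hne
    subst hUuniv
    filter_upwards with n
    simpa using lt_of_lt_of_le hb (by simp)

lemma eventually_lt_of_weakConv {νs : ℕ → Measure E} {ν : Measure E}
    [∀ n, IsProbabilityMeasure (νs n)] [IsProbabilityMeasure ν]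
    (h : WeakConv νs ν) {U : Set E} (hU : IsOpen U) {b : ℝ}
    (hb : b < (ν U).toReal) : ∀ᶠ n in atTop, b < ((νs n) U).toReal :=
  eventually_lt_of_minorant_conv (fun m => h (minorant U m)) hU hb

end Minorant

section Tightness

variable {E : Type*} [MetricSpace E] [MeasurableSpace E] [BorelSpace E]

set_option linter.unusedSectionVars false

lemma compl_small {κ : Measure E} [IsProbabilityMeasure κ] {U : Set E}
    (hU : MeasurableSet U) {a : ℝ} (ha : 0 ≤ a) (h : 1 - a < (κ U).toReal) :
    κ Uᶜ ≤ ENNReal.ofReal a := by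
  rw [ENNReal.le_ofReal_iff_toReal_le (measure_ne_top κ _) ha,
    prob_compl_eq_one_sub hU, ENNReal.toReal_sub_of_le prob_le_one ENNReal.one_ne_top]
  simp only [ENNReal.toReal_one]
  linarith

/-- The single-measure version: measures of growing finite unions of balls tend to 1. -/
lemma tendsto_meas_balls (κ : Measure E) [IsProbabilityMeasure κ] (x : ℕ → E)
    (hx : DenseRange x) {r : ℝ} (hr : 0 < r) :
    Tendsto (fun m => κ (⋃ j ∈ Finset.range m, Metric.ball (x j) r)) atTop (𝓝 1) := by
  have hmono : Monotone (fun m => ⋃ j ∈ Finset.range m, Metric.ball (x j) r) := by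
    intro a b hab
    refine Set.iUnion₂_subset fun j hj => Set.subset_iUnion₂_of_subset j ?_ subset_rfl
    exact Finset.mem_range.mpr (lt_of_lt_of_le (Finset.mem_range.mp hj) hab)
  have hunion : ⋃ m, ⋃ j ∈ Finset.range m, Metric.ball (x j) r = Set.univ := by
    ext y
    simp only [Set.mem_iUnion, Set.mem_univ, iff_true]
    obtain ⟨j, hj⟩ := Metric.denseRange_iff.mp hx y r hr
    exact ⟨j + 1, j, by simpa using hj⟩
  have := tendsto_measure_iUnion_atTop (μ := κ) hmono
  rw [hunion] at this
  simpa [Function.comp_def] using this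

lemma exists_good_union {νs : ℕ → Measure E} {ν : Measure E}
    [∀ n, IsProbabilityMeasure (νs n)] [IsProbabilityMeasure ν]
    (h : WeakConv νs ν) (x : ℕ → E) (hx : DenseRange x) {r : ℝ} (hr : 0 < r)
    {a : ℝ} (ha : 0 < a) (ha1 : a ≤ 1) :
    ∃ m : ℕ, ν (⋃ j ∈ Finset.range m, Metric.ball (x j) r)ᶜ ≤ ENNReal.ofReal a ∧
      ∀ n, νs n (⋃ j ∈ Finset.range m, Metric.ball (x j) r)ᶜ ≤ ENNReal.ofReal a := by
  set U : ℕ → Set E := fun m => ⋃ j ∈ Finset.range m, Metric.ball (x j) r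
  have hUopen : ∀ m, IsOpen (U m) := fun m =>
    isOpen_biUnion (fun j _ => Metric.isOpen_ball)
  have hUmono : Monotone U := by
    intro p q hpq
    refine Set.iUnion₂_subset fun j hj => Set.subset_iUnion₂_of_subset j ?_ subset_rfl
    exact Finset.mem_range.mpr (lt_of_lt_of_le (Finset.mem_range.mp hj) hpq)
  have key : ∀ κ : Measure E, IsProbabilityMeasure κ →
      ∀ᶠ m in atTop, 1 - a < (κ (U m)).toReal := by
    intro κ hκ
    have h1 := tendsto_meas_balls κ x hx hr
    have h2 : ENNReal.ofReal (1 - a) < 1 := by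
      apply lt_of_lt_of_le (ENNReal.ofReal_lt_ofReal_iff (by norm_num : (0:ℝ) < 1) |>.mpr
        (by linarith)) (by simp)
    filter_upwards [h1.eventually_const_lt h2] with m hm
    rw [← ENNReal.ofReal_lt_iff_lt_toReal (by linarith) (measure_ne_top κ _)]
    exact hm
  obtain ⟨m₀, hm₀⟩ := (key ν inferInstance).exists
  obtain ⟨N, hN⟩ := eventually_atTop.mp (eventually_lt_of_weakConv h (hUopen m₀) hm₀)
  have hsmall : ∀ n, ∃ m, 1 - a < ((νs n) (U m)).toReal := fun n =>
    (key (νs n) inferInstance).exists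
  choose mf hmf using hsmall
  set M : ℕ := max m₀ ((Finset.range N).sup mf) with hM
  refine ⟨M, ?_, ?_⟩
  · apply compl_small (hUopen M).measurableSet ha.le
    exact lt_of_lt_of_le hm₀ (ENNReal.toReal_mono (measure_ne_top ν _)
      (measure_mono (hUmono (le_max_left _ _))))
  · intro n
    apply compl_small (hUopen M).measurableSet ha.le
    rcases lt_or_ge n N with hn | hn
    · refine lt_of_lt_of_le (hmf n) (ENNReal.toReal_mono (measure_ne_top _ _)
        (measure_mono (hUmono ?_)))
      exact le_trans (Finset.le_sup (Finset.mem_range.mpr hn)) (le_max_right _ _)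
    · exact lt_of_lt_of_le (hN n hn) (ENNReal.toReal_mono (measure_ne_top _ _)
        (measure_mono (hUmono (le_max_left _ _))))

/-- **Uniform tightness** of a weakly convergent sequence of probability measures on a
complete separable metric space. -/
lemma uniform_tight [CompleteSpace E] [TopologicalSpace.SeparableSpace E] [Nonempty E]
    {νs : ℕ → Measure E} {ν : Measure E}
    [∀ n, IsProbabilityMeasure (νs n)] [IsProbabilityMeasure ν]
    (h : WeakConv νs ν) {ε : ℝ} (hε : 0 < ε) :
    ∃ K : Set E, IsCompact K ∧ ν Kᶜ ≤ ENNReal.ofReal ε ∧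
      ∀ n, νs n Kᶜ ≤ ENNReal.ofReal ε := by
  obtain ⟨x, hx⟩ : ∃ x : ℕ → E, DenseRange x := ⟨_, TopologicalSpace.denseRange_denseSeq E⟩
  have hstep : ∀ k : ℕ, ∃ m : ℕ,
      ν (⋃ j ∈ Finset.range m, Metric.ball (x j) (1/(k+1)))ᶜ ≤
        ENNReal.ofReal (min (ε / 2^(k+1)) 1) ∧
      ∀ n, νs n (⋃ j ∈ Finset.range m, Metric.ball (x j) (1/(k+1)))ᶜ ≤
        ENNReal.ofReal (min (ε / 2^(k+1)) 1) := by
    intro k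
    apply exists_good_union h x hx
    · positivity
    · apply lt_min
      · positivity
      · norm_num
    · exact min_le_right _ _
  choose m hm1 hm2 using hstep
  set S : Set E := ⋂ k : ℕ, ⋃ j ∈ Finset.range (m k), Metric.ball (x j) (1/(k+1)) with hS
  have hsum : ∀ κ : Measure E, (∀ k, κ (⋃ j ∈ Finset.range (m k),
      Metric.ball (x j) (1/(k+1)))ᶜ ≤ ENNReal.ofReal (min (ε / 2^(k+1)) 1)) →
      κ (closure S)ᶜ ≤ ENNReal.ofReal ε := by
    intro κ hκ
    have h1 : (closure S)ᶜ ⊆ Sᶜ := Set.compl_subset_compl.mpr subset_closure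
    have h2 : Sᶜ = ⋃ k : ℕ, (⋃ j ∈ Finset.range (m k), Metric.ball (x j) (1/(k+1)))ᶜ := by
      rw [hS, Set.compl_iInter]
    calc κ (closure S)ᶜ ≤ κ Sᶜ := measure_mono h1
      _ ≤ ∑' k : ℕ, κ (⋃ j ∈ Finset.range (m k), Metric.ball (x j) (1/(k+1)))ᶜ := by
          rw [h2]; exact measure_iUnion_le _
      _ ≤ ∑' k : ℕ, ENNReal.ofReal (min (ε / 2^(k+1)) 1) := ENNReal.tsum_le_tsum hκ
      _ ≤ ∑' k : ℕ, ENNReal.ofReal (ε / 2^(k+1)) :=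
          ENNReal.tsum_le_tsum (fun k => ENNReal.ofReal_le_ofReal (min_le_left _ _))
      _ = ENNReal.ofReal (∑' k : ℕ, ε / 2^(k+1)) :=
          (ENNReal.ofReal_tsum_of_nonneg (fun k => by positivity)
            ((summable_geometric_two' ε).congr (fun k => by ring))).symm
      _ = ENNReal.ofReal ε := by
          have heq : (fun k : ℕ => ε / 2^(k+1)) = fun k : ℕ => ε / 2 / 2^k := by
            funext k; ring
          rw [heq, tsum_geometric_two' ε]
  have hSt : TotallyBounded S := by
    rw [Metric.totallyBounded_iff]
    intro r hr
    obtain ⟨k, hk⟩ := exists_nat_one_div_lt hr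
    refine ⟨x '' (Finset.range (m k) : Set ℕ), (Set.toFinite _).image x, ?_⟩
    intro y hy
    have : y ∈ ⋃ j ∈ Finset.range (m k), Metric.ball (x j) (1/(k+1)) := by
      rw [hS] at hy
      exact Set.mem_iInter.mp hy k
    simp only [Set.mem_iUnion] at this ⊢
    obtain ⟨j, hj, hyj⟩ := this
    refine ⟨x j, ⟨j, by simpa using hj, rfl⟩, ?_⟩
    exact Metric.ball_subset_ball hk.le hyj
  refine ⟨closure S, ?_, hsum ν hm1, fun n => hsum (νs n) (fun k => hm2 k n)⟩
  exact TotallyBounded.isCompact_of_isClosed hSt.closure isClosed_closure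

end Tightness

section Equicontinuity

lemma equicont_of_compact {X Y : Type*} [MetricSpace X] [CompactSpace X] [MetricSpace Y]
    {K : Set C(X, Y)} (hK : IsCompact K) {η : ℝ} (hη : 0 < η) :
    ∃ δ : ℝ, 0 < δ ∧ ∀ φ ∈ K, ∀ s t : X, dist s t ≤ δ → dist (φ s) (φ t) ≤ η := by
  obtain ⟨s, hsfin, hsK⟩ := Metric.totallyBounded_iff.mp hK.totallyBounded (η/4) (by linarith)
  have hUC : ∀ y : C(X, Y), ∃ δ : ℝ, 0 < δ ∧ ∀ a b : X, dist a b < δ → dist (y a) (y b) < η/4 := by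
    intro y
    have := CompactSpace.uniformContinuous_of_continuous y.continuous
    rw [Metric.uniformContinuous_iff] at this
    obtain ⟨δ, hδ, hδ'⟩ := this (η/4) (by linarith)
    exact ⟨δ, hδ, fun a b hab => hδ' hab⟩
  choose δf hδf0 hδf using hUC
  set F : Finset C(X, Y) := hsfin.toFinset with hF
  by_cases hne : F.Nonempty
  · have h0 : 0 < F.inf' hne δf := by
      rw [Finset.lt_inf'_iff]
      exact fun y _ => hδf0 y
    refine ⟨(F.inf' hne δf) / 2, by linarith, ?_⟩
    intro φ hφ a b hab
    obtain ⟨y, hy, hφy⟩ := Set.mem_iUnion₂.mp (hsK hφ)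
    have hyF : y ∈ F := hsfin.mem_toFinset.mpr hy
    have h1 : dist a b < δf y := by
      calc dist a b ≤ (F.inf' hne δf) / 2 := hab
        _ < F.inf' hne δf := by linarith
        _ ≤ δf y := Finset.inf'_le _ hyF
    have h2 : dist φ y < η/4 := Metric.mem_ball.mp hφy
    calc dist (φ a) (φ b) ≤ dist (φ a) (y a) + dist (y a) (y b) + dist (y b) (φ b) :=
          dist_triangle4 _ _ _ _
      _ ≤ dist φ y + dist (y a) (y b) + dist y φ := by
          gcongr
          · exact ContinuousMap.dist_apply_le_dist a
          · exact ContinuousMap.dist_apply_le_dist b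
      _ ≤ η/4 + η/4 + η/4 := by
          rw [dist_comm y φ]
          gcongr
          exact (hδf y a b h1).le
      _ ≤ η := by linarith
  · refine ⟨1, one_pos, fun φ hφ => absurd (hsK hφ) ?_⟩
    rw [Finset.not_nonempty_iff_eq_empty] at hne
    have : s = ∅ := by simpa [hF] using congrArg (fun t : Finset C(X,Y) => (t : Set C(X,Y))) hne
    simp [this]

end Equicontinuity

section Interp

noncomputable def wt (m : ℕ) (j : Fin (m+1)) (t : ℝ) : ℝ := max 0 (1 - |m * t - j|)

lemma wt_nonneg {m : ℕ} {j : Fin (m+1)} {t : ℝ} : 0 ≤ wt m j t := le_max_left _ _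

lemma wt_cont (m : ℕ) (j : Fin (m+1)) : Continuous (wt m j) :=
  continuous_const.max (continuous_const.sub
    (((continuous_const.mul continuous_id).sub continuous_const).abs))

noncomputable def wsum (m : ℕ) (t : ℝ) : ℝ := ∑ j : Fin (m+1), wt m j t

lemma wsum_cont (m : ℕ) : Continuous (wsum m) :=
  continuous_finset_sum _ fun j _ => wt_cont m j

lemma wsum_ge (m : ℕ) {t : ℝ} (ht : t ∈ Set.Icc (0:ℝ) 1) : 1/2 ≤ wsum m t := by
  set n : ℕ := ⌊(m : ℝ) * t + 1/2⌋₊ with hn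
  have h0 : (0:ℝ) ≤ m * t := mul_nonneg (Nat.cast_nonneg m) ht.1
  have hmt : (m:ℝ) * t ≤ m := by
    calc (m:ℝ) * t ≤ m * 1 := by gcongr; exact ht.2
      _ = m := mul_one _
  have hnm : n ≤ m := by
    have h := (Nat.floor_lt (by linarith : (0:ℝ) ≤ (m:ℝ) * t + 1/2)).mpr
      (show (m:ℝ) * t + 1/2 < ((m+1 : ℕ):ℝ) by push_cast; linarith)
    omega
  set j : Fin (m+1) := ⟨n, by omega⟩ with hj
  have hjle : |(m:ℝ) * t - j| ≤ 1/2 := by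
    rw [abs_le]
    have h1 : (n:ℝ) ≤ m * t + 1/2 := Nat.floor_le (by linarith)
    have h2 : (m:ℝ) * t + 1/2 < n + 1 := Nat.lt_floor_add_one _
    constructor <;> (simp only [hj]; push_cast; linarith)
  have hwt : 1/2 ≤ wt m j t := by
    rw [wt]
    calc (1:ℝ)/2 ≤ 1 - |(m:ℝ)*t - j| := by linarith
      _ ≤ max 0 (1 - |(m:ℝ)*t - j|) := le_max_right _ _
  calc (1:ℝ)/2 ≤ wt m j t := hwt
    _ ≤ wsum m t := Finset.single_le_sum (f := fun i => wt m i t)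
        (fun i _ => wt_nonneg) (Finset.mem_univ j)

lemma wsum_pos (m : ℕ) {t : ℝ} (ht : t ∈ Set.Icc (0:ℝ) 1) : 0 < wsum m t :=
  lt_of_lt_of_le (by norm_num) (wsum_ge m ht)

lemma wt_ne_zero {m : ℕ} (hm : 0 < m) {j : Fin (m+1)} {t : ℝ} (h : wt m j t ≠ 0) :
    |t - (j:ℝ)/m| ≤ 1/m := by
  have h1 : |(m:ℝ) * t - j| < 1 := by
    by_contra hc
    push_neg at hc
    apply h
    rw [wt, max_eq_left (by linarith)]
  have hm' : (0:ℝ) < m := by exact_mod_cast hm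
  have heq : t - (j:ℝ)/m = ((m:ℝ) * t - j)/m := by
    field_simp
  rw [heq, abs_div, abs_of_pos hm']
  gcongr

/-- The interpolation operator as a jointly continuous map. -/
noncomputable def interpCM (d m : ℕ) :
    C((Fin (m+1) → (Fin d → ℝ)) × Set.Icc (0:ℝ) 1, Fin d → ℝ) :=
  ⟨fun p => (wsum m (p.2 : ℝ))⁻¹ • ∑ j, wt m j (p.2 : ℝ) • p.1 j, by
    apply Continuous.fun_smul
    · apply Continuous.inv₀
      · exact (wsum_cont m).comp (continuous_subtype_val.comp continuous_snd)
      · intro p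
        exact ne_of_gt (wsum_pos m p.2.2)
    · apply continuous_finset_sum
      intro j _
      exact (((wt_cont m j).comp (continuous_subtype_val.comp continuous_snd)).smul
        ((continuous_apply j).comp continuous_fst))⟩

noncomputable def node (m : ℕ) (hm : 0 < m) (j : Fin (m+1)) : Set.Icc (0:ℝ) 1 :=
  ⟨(j : ℝ)/m, ⟨by positivity, by
    rw [div_le_one (by exact_mod_cast hm)]
    have := j.isLt
    exact_mod_cast Nat.lt_succ_iff.mp this⟩⟩

lemma interp_approx (d m : ℕ) (hm : 0 < m) (f : C(Set.Icc (0:ℝ) 1, Fin d → ℝ)) {η : ℝ}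
    (hf : ∀ s t : Set.Icc (0:ℝ) 1, |(s:ℝ) - (t:ℝ)| ≤ 1/m → dist (f s) (f t) ≤ η)
    (t : Set.Icc (0:ℝ) 1) :
    dist ((ContinuousMap.curry (interpCM d m)) (fun j => f (node m hm j)) t) (f t) ≤ η := by
  have hη : 0 ≤ η := le_trans dist_nonneg (hf t t (by rw [sub_self, abs_zero]; positivity))
  have happ : (ContinuousMap.curry (interpCM d m)) (fun j => f (node m hm j)) t =
      (wsum m (t : ℝ))⁻¹ • ∑ j, wt m j (t : ℝ) • f (node m hm j) := rfl
  have hpos := wsum_pos m t.2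
  have hft : f t = (wsum m (t : ℝ))⁻¹ • ∑ j : Fin (m+1), wt m j (t : ℝ) • f t := by
    rw [← Finset.sum_smul]
    rw [show (∑ j : Fin (m+1), wt m j (t:ℝ)) = wsum m (t:ℝ) from rfl]
    rw [smul_smul, inv_mul_cancel₀ (ne_of_gt hpos), one_smul]
  rw [dist_eq_norm, happ]
  rw [hft]
  rw [← smul_sub, ← Finset.sum_sub_distrib]
  have hterm : ∀ j : Fin (m+1), wt m j (t:ℝ) • f (node m hm j) - wt m j (t:ℝ) • f t
      = wt m j (t:ℝ) • (f (node m hm j) - f t) := fun j => (smul_sub _ _ _).symm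
  simp_rw [hterm]
  rw [norm_smul]
  calc ‖(wsum m (t:ℝ))⁻¹‖ * ‖∑ j, wt m j (t:ℝ) • (f (node m hm j) - f t)‖
      ≤ (wsum m (t:ℝ))⁻¹ * ∑ j, ‖wt m j (t:ℝ) • (f (node m hm j) - f t)‖ := by
        rw [Real.norm_eq_abs, abs_of_pos (inv_pos.mpr hpos)]
        gcongr
        exact norm_sum_le _ _
    _ ≤ (wsum m (t:ℝ))⁻¹ * ∑ j, wt m j (t:ℝ) * η := by
        gcongr with j hj
        rw [norm_smul, Real.norm_eq_abs, abs_of_nonneg wt_nonneg]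
        by_cases hz : wt m j (t:ℝ) = 0
        · rw [hz]; simp
        · apply mul_le_mul_of_nonneg_left _ wt_nonneg
          rw [← dist_eq_norm]
          apply hf
          have := wt_ne_zero hm hz
          rw [node]
          rw [abs_sub_comm] at this
          simpa using this
    _ = (wsum m (t:ℝ))⁻¹ * (wsum m (t:ℝ) * η) := by rw [← Finset.sum_mul]; rfl
    _ = η := by field_simp

end Interp

section Core

/-- Package a bounded continuous function. -/
noncomputable def bcfOf {E : Type*} [TopologicalSpace E] (h : E → ℝ) (hc : Continuous h)
    (B : ℝ) (hb : ∀ x, |h x| ≤ B) : BoundedContinuousFunction E ℝ :=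
  ⟨⟨h, hc⟩, ⟨2*B, fun x y => by
    rw [Real.dist_eq]
    calc |h x - h y| ≤ |h x| + |h y| := abs_sub _ _
      _ ≤ 2*B := by linarith [hb x, hb y]⟩⟩

@[simp] lemma bcfOf_apply {E : Type*} [TopologicalSpace E] (h : E → ℝ) (hc : Continuous h)
    (B : ℝ) (hb : ∀ x, |h x| ≤ B) (x : E) : bcfOf h hc B hb x = h x := rfl

lemma pairing_single {d : ℕ} (i : Fin d) (x : Fin d → ℝ) :
    pairingCM d (Pi.single i 1) x = x i := by
  have hsh : pairingCM d (Pi.single i 1) x = ∑ j, (Pi.single i (1:ℝ) : Fin d → ℝ) j * x j := rfl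
  rw [hsh, Finset.sum_eq_single i]
  · simp
  · intro b _ hb
    rw [Pi.single_eq_of_ne hb]
    simp
  · intro hi
    exact absurd (Finset.mem_univ i) hi

lemma core_tendsto
    (d : ℕ) (hd : 1 ≤ d)
    (μs : ℕ → Measure C(Set.Icc (0:ℝ) 1, Fin d → ℝ))
    (μ : Measure C(Set.Icc (0:ℝ) 1, Fin d → ℝ))
    (hμs : ∀ n, IsProbabilityMeasure (μs n)) (hμ : IsProbabilityMeasure μ)
    (hproj : ∀ c : Fin d → ℝ,
      WeakConv
        (fun n => (μs n).map (fun f => (pairingCM d c).comp f))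
        (μ.map (fun f => (pairingCM d c).comp f)))
    (hfdd : ∀ (k : ℕ) (t : Fin k → Set.Icc (0:ℝ) 1),
      WeakConv
        (fun n => (μs n).map (fun f => fun i => f (t i)))
        (μ.map (fun f => fun i => f (t i))))
    (g : C(Set.Icc (0:ℝ) 1, Fin d → ℝ) → ℝ) (hgc : Continuous g)
    (L B : ℝ) (hL0 : 0 ≤ L) (hB0 : 0 ≤ B)
    (hgL : ∀ x y, dist (g x) (g y) ≤ L * dist x y)
    (hgB : ∀ x, |g x| ≤ B) :
    Tendsto (fun n => ∫ x, g x ∂(μs n)) atTop (𝓝 (∫ x, g x ∂μ)) := by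
  haveI := hμ
  haveI : ∀ n, IsProbabilityMeasure (μs n) := hμs
  haveI : Nonempty (Fin d) := ⟨⟨0, hd⟩⟩
  rw [Metric.tendsto_atTop]
  intro ε hε
  have hd0 : (0:ℝ) < d := by
    have : 0 < d := hd
    exact_mod_cast this
  have h16 : (0:ℝ) < 16 * (B+1) * d := by nlinarith
  have h8L : (0:ℝ) < 8 * (L+1) := by nlinarith
  set ε₀ : ℝ := ε / (16 * (B+1) * d) with hε₀def
  have hε₀ : 0 < ε₀ := div_pos hε h16
  set η : ℝ := ε / (8 * (L+1)) with hηdef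
  have hη : 0 < η := div_pos hε h8L
  have hcoordcont : ∀ i : Fin d,
      Continuous (fun f : C(Set.Icc (0:ℝ) 1, Fin d → ℝ) =>
        (pairingCM d (Pi.single i 1)).comp f) :=
    fun i => ContinuousMap.continuous_postcomp _
  -- compact sets controlling each coordinate
  have hKex : ∀ i : Fin d, ∃ K : Set C(Set.Icc (0:ℝ) 1, ℝ), IsCompact K ∧
      (μ.map (fun f => (pairingCM d (Pi.single i 1)).comp f)) Kᶜ ≤ ENNReal.ofReal ε₀ ∧
      ∀ n, ((μs n).map (fun f => (pairingCM d (Pi.single i 1)).comp f)) Kᶜ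
        ≤ ENNReal.ofReal ε₀ := by
    intro i
    haveI : ∀ n, IsProbabilityMeasure
        ((μs n).map (fun f => (pairingCM d (Pi.single i 1)).comp f)) :=
      fun n => Measure.isProbabilityMeasure_map (hcoordcont i).measurable.aemeasurable
    haveI : IsProbabilityMeasure
        (μ.map (fun f => (pairingCM d (Pi.single i 1)).comp f)) :=
      Measure.isProbabilityMeasure_map (hcoordcont i).measurable.aemeasurable
    haveI : Nonempty C(Set.Icc (0:ℝ) 1, ℝ) := ⟨ContinuousMap.const _ 0⟩
    exact uniform_tight (hproj (Pi.single i 1)) hε₀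
  choose K hKcomp hKμ hKμs using hKex
  -- equicontinuity
  have hδex : ∀ i : Fin d, ∃ δ : ℝ, 0 < δ ∧ ∀ φ ∈ K i, ∀ s t : Set.Icc (0:ℝ) 1,
      dist s t ≤ δ → dist (φ s) (φ t) ≤ η :=
    fun i => equicont_of_compact (hKcomp i) hη
  choose δf hδf0 hδf using hδex
  have hFinne : (Finset.univ : Finset (Fin d)).Nonempty := Finset.univ_nonempty
  set δ : ℝ := Finset.univ.inf' hFinne δf with hδdef
  have hδ0 : 0 < δ := by
    rw [hδdef, Finset.lt_inf'_iff]
    exact fun i _ => hδf0 i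
  obtain ⟨m', hm'⟩ := exists_nat_one_div_lt hδ0
  set m : ℕ := m' + 1 with hmdef
  have hm0 : 0 < m := Nat.succ_pos _
  have hminv : 1/(m:ℝ) ≤ δ := by
    have hcast : ((m':ℝ)+1) = (m:ℝ) := by rw [hmdef]; push_cast; ring
    rw [← hcast]
    exact hm'.le
  -- the good set
  set GoodSet : Set C(Set.Icc (0:ℝ) 1, Fin d → ℝ) :=
    ⋂ i : Fin d, (fun f => (pairingCM d (Pi.single i 1)).comp f) ⁻¹' (K i) with hGdef
  have hGmeas : MeasurableSet GoodSet :=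
    MeasurableSet.iInter (fun i =>
      (hcoordcont i).measurable ((hKcomp i).isClosed.measurableSet))
  have hGB : ∀ κ : Measure C(Set.Icc (0:ℝ) 1, Fin d → ℝ), IsProbabilityMeasure κ →
      (∀ i : Fin d, (κ.map (fun f => (pairingCM d (Pi.single i 1)).comp f)) (K i)ᶜ
        ≤ ENNReal.ofReal ε₀) → (κ GoodSetᶜ).toReal ≤ d * ε₀ := by
    intro κ hκi hκ
    have h2 : GoodSetᶜ = ⋃ i : Fin d,
        ((fun f => (pairingCM d (Pi.single i 1)).comp f) ⁻¹' (K i)ᶜ) := by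
      rw [hGdef, Set.compl_iInter]
      simp [Set.preimage_compl]
    have h1 : κ GoodSetᶜ ≤ ENNReal.ofReal (d * ε₀) := by
      calc κ GoodSetᶜ
          ≤ ∑' i : Fin d, κ ((fun f => (pairingCM d (Pi.single i 1)).comp f) ⁻¹' (K i)ᶜ) := by
            rw [h2]; exact measure_iUnion_le _
        _ = ∑' i : Fin d, (κ.map (fun f => (pairingCM d (Pi.single i 1)).comp f)) (K i)ᶜ :=
            tsum_congr (fun i => (Measure.map_apply (hcoordcont i).measurable
              (hKcomp i).isClosed.measurableSet.compl).symm)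
        _ ≤ ∑' i : Fin d, ENNReal.ofReal ε₀ := ENNReal.tsum_le_tsum hκ
        _ = (d : ENNReal) * ENNReal.ofReal ε₀ := by
            rw [tsum_fintype]
            simp [Finset.sum_const, Finset.card_univ, nsmul_eq_mul]
        _ = ENNReal.ofReal (d * ε₀) := by
            rw [ENNReal.ofReal_mul (Nat.cast_nonneg d), ENNReal.ofReal_natCast]
    exact ENNReal.toReal_le_of_le_ofReal (by positivity) h1
  -- modulus of continuity on the good set
  have hmod : ∀ f ∈ GoodSet, ∀ s t : Set.Icc (0:ℝ) 1, |(s:ℝ) - (t:ℝ)| ≤ 1/(m:ℝ) →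
      dist (f s) (f t) ≤ η := by
    intro f hf s t hst
    rw [dist_pi_le_iff hη.le]
    intro i
    have hfi : (pairingCM d (Pi.single i 1)).comp f ∈ K i := by
      have := Set.mem_iInter.mp (by rw [hGdef] at hf; exact hf) i
      exact Set.mem_preimage.mp this
    have hdst : dist s t ≤ δf i := by
      have h1 : dist s t ≤ δ := by
        rw [Subtype.dist_eq, Real.dist_eq]
        exact le_trans hst hminv
      exact le_trans h1 (by rw [hδdef] at *; exact Finset.inf'_le δf (Finset.mem_univ i))
    have h1 := hδf i _ hfi s t hdst
    simp only [ContinuousMap.comp_apply] at h1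
    rw [pairing_single, pairing_single] at h1
    exact h1
  -- interpolation map
  set T : C(Set.Icc (0:ℝ) 1, Fin d → ℝ) → C(Set.Icc (0:ℝ) 1, Fin d → ℝ) :=
    fun f => (ContinuousMap.curry (interpCM d m)) (fun j => f (node m hm0 j)) with hTdef
  have hπc : Continuous (fun f : C(Set.Icc (0:ℝ) 1, Fin d → ℝ) =>
      fun j : Fin (m+1) => f (node m hm0 j)) :=
    continuous_pi (fun j => continuous_eval_const _)
  have hTcont : Continuous T :=
    (map_continuous (ContinuousMap.curry (interpCM d m))).comp hπc
  have hTnear : ∀ f ∈ GoodSet, dist (T f) f ≤ η := fun f hf =>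
    (ContinuousMap.dist_le hη.le).mpr (fun t => interp_approx d m hm0 f (hmod f hf) t)
  -- integral comparison
  have hInt : ∀ κ : Measure C(Set.Icc (0:ℝ) 1, Fin d → ℝ), IsProbabilityMeasure κ →
      (κ GoodSetᶜ).toReal ≤ d * ε₀ →
      |∫ x, g x ∂κ - ∫ x, g (T x) ∂κ| ≤ L*η + 2*B*(d*ε₀) := by
    intro κ hκi hκb
    have hig : Integrable g κ := (bcfOf g hgc B hgB).integrable κ
    have higT : Integrable (fun x => g (T x)) κ :=
      (bcfOf (fun x => g (T x)) (hgc.comp hTcont) B (fun x => hgB _)).integrable κ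
    have hptw : ∀ x, |g x - g (T x)| ≤ L*η + Set.indicator GoodSetᶜ (fun _ => 2*B) x := by
      intro x
      by_cases hx : x ∈ GoodSet
      · rw [Set.indicator_of_notMem (Set.notMem_compl_iff.mpr hx), add_zero]
        calc |g x - g (T x)| = dist (g x) (g (T x)) := (Real.dist_eq _ _).symm
          _ ≤ L * dist x (T x) := hgL x (T x)
          _ ≤ L * η := by
              apply mul_le_mul_of_nonneg_left _ hL0
              rw [dist_comm]
              exact hTnear x hx
      · rw [Set.indicator_of_mem (Set.mem_compl hx)]
        have hLη : 0 ≤ L * η := mul_nonneg hL0 hη.le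
        calc |g x - g (T x)| ≤ |g x| + |g (T x)| := abs_sub _ _
          _ ≤ B + B := add_le_add (hgB x) (hgB _)
          _ ≤ L*η + 2*B := by linarith
    have hIind : Integrable (fun x => L*η + Set.indicator GoodSetᶜ (fun _ => 2*B) x) κ :=
      (integrable_const _).add ((integrable_const (2*B)).indicator hGmeas.compl)
    calc |∫ x, g x ∂κ - ∫ x, g (T x) ∂κ|
        = |∫ x, (g x - g (T x)) ∂κ| := by rw [integral_sub hig higT]
      _ ≤ ∫ x, |g x - g (T x)| ∂κ := by
          have := norm_integral_le_integral_norm (μ := κ) (fun x => g x - g (T x))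
          simpa [Real.norm_eq_abs] using this
      _ ≤ ∫ x, (L*η + Set.indicator GoodSetᶜ (fun _ => 2*B) x) ∂κ :=
          integral_mono (hig.sub higT).abs hIind hptw
      _ = L*η + (κ GoodSetᶜ).toReal * (2*B) := by
          rw [integral_add (integrable_const _)
            ((integrable_const (2*B)).indicator hGmeas.compl),
            integral_const, integral_indicator_const (2*B) hGmeas.compl, smul_eq_mul,
            smul_eq_mul, probReal_univ, one_mul, Measure.real_def]
      _ ≤ L*η + 2*B*(d*ε₀) := by nlinarith [ENNReal.toReal_nonneg (a := κ GoodSetᶜ)]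
  -- convergence along finite-dimensional distributions
  set hbc : BoundedContinuousFunction (Fin (m+1) → (Fin d → ℝ)) ℝ :=
    bcfOf (fun v => g ((ContinuousMap.curry (interpCM d m)) v))
      (hgc.comp (map_continuous (ContinuousMap.curry (interpCM d m)))) B (fun v => hgB _)
  have hrw : ∀ κ : Measure C(Set.Icc (0:ℝ) 1, Fin d → ℝ), IsProbabilityMeasure κ →
      ∫ v, hbc v ∂(κ.map (fun f => fun j => f (node m hm0 j))) = ∫ x, g (T x) ∂κ := by
    intro κ hκi
    rw [integral_map hπc.measurable.aemeasurable hbc.continuous.aestronglyMeasurable]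
    rfl
  have hTint : Tendsto (fun n => ∫ x, g (T x) ∂(μs n)) atTop (𝓝 (∫ x, g (T x) ∂μ)) := by
    have h0 := hfdd (m+1) (node m hm0) hbc
    rw [hrw μ hμ] at h0
    exact Tendsto.congr (fun n => hrw (μs n) (hμs n)) h0
  obtain ⟨N, hN⟩ := (Metric.tendsto_atTop.mp hTint) (ε/4) (by positivity)
  refine ⟨N, fun n hn => ?_⟩
  have e1 := hInt (μs n) (hμs n) (hGB (μs n) (hμs n) (fun i => hKμs i n))
  have e2 := hInt μ hμ (hGB μ hμ (fun i => hKμ i))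
  have e3 := hN n hn
  rw [Real.dist_eq] at e3 ⊢
  have hLη : L * η ≤ ε/8 := by
    have heq : L * η = (L*ε)/(8*(L+1)) := by rw [hηdef]; ring
    rw [heq, div_le_div_iff₀ h8L (by norm_num : (0:ℝ) < 8)]
    nlinarith
  have hBε : 2*B*(d*ε₀) ≤ ε/8 := by
    have heq : 2*B*(d*ε₀) = (2*B*(d:ℝ)*ε)/(16*(B+1)*d) := by rw [hε₀def]; ring
    rw [heq, div_le_div_iff₀ h16 (by norm_num : (0:ℝ) < 8)]
    nlinarith [mul_pos hd0 hε]
  calc |∫ x, g x ∂(μs n) - ∫ x, g x ∂μ|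
      ≤ |∫ x, g x ∂(μs n) - ∫ x, g (T x) ∂(μs n)|
        + |∫ x, g (T x) ∂(μs n) - ∫ x, g x ∂μ| := abs_sub_le _ _ _
    _ ≤ |∫ x, g x ∂(μs n) - ∫ x, g (T x) ∂(μs n)|
        + (|∫ x, g (T x) ∂(μs n) - ∫ x, g (T x) ∂μ| + |∫ x, g (T x) ∂μ - ∫ x, g x ∂μ|) := by
          gcongr
          exact abs_sub_le _ _ _
    _ ≤ (L*η + 2*B*(d*ε₀)) + (ε/4 + (L*η + 2*B*(d*ε₀))) := by
          gcongr
          rw [abs_sub_comm]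
          exact e2
    _ < ε := by linarith

end Core

/-- **Cramér–Wold device for stochastic processes (continuous-path, uniform topology form).**
Let `μ_n, μ` be Borel probability measures on `C([0,1], ℝ^d)`.  If (i) for every `c ∈ ℝ^d`
the pushforwards under `f ↦ (t ↦ ⟨c, f(t)⟩)` converge weakly on `C([0,1], ℝ)`, and (ii) all
finite-dimensional distributions converge weakly, then `μ_n` converges weakly to `μ`. -/
theorem cramer_wold_for_processes
    (d : ℕ) (hd : 1 ≤ d)
    (μs : ℕ → Measure C(Set.Icc (0:ℝ) 1, Fin d → ℝ))
    (μ : Measure C(Set.Icc (0:ℝ) 1, Fin d → ℝ))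
    (hμs : ∀ n, IsProbabilityMeasure (μs n)) (hμ : IsProbabilityMeasure μ)
    (hproj : ∀ c : Fin d → ℝ,
      WeakConv
        (fun n => (μs n).map (fun f => (pairingCM d c).comp f))
        (μ.map (fun f => (pairingCM d c).comp f)))
    (hfdd : ∀ (k : ℕ) (t : Fin k → Set.Icc (0:ℝ) 1),
      WeakConv
        (fun n => (μs n).map (fun f => fun i => f (t i)))
        (μ.map (fun f => fun i => f (t i)))) :
    WeakConv μs μ := by
  haveI : ∀ n, IsProbabilityMeasure (μs n) := hμs
  haveI := hμ
  set P : ℕ → ProbabilityMeasure C(Set.Icc (0:ℝ) 1, Fin d → ℝ) :=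
    fun n => ⟨μs n, hμs n⟩ with hPdef
  set Q : ProbabilityMeasure C(Set.Icc (0:ℝ) 1, Fin d → ℝ) := ⟨μ, hμ⟩ with hQdef
  have hPQ : Tendsto P atTop (𝓝 Q) := by
    apply MeasureTheory.tendsto_of_forall_isOpen_le_liminf
    intro G hG
    have hcore : ∀ mm : ℕ, Tendsto (fun n => ∫ x, minorant G mm x ∂(μs n)) atTop
        (𝓝 (∫ x, minorant G mm x ∂μ)) := by
      intro mm
      exact core_tendsto d hd μs μ hμs hμ hproj hfdd (fun x => minorant G mm x)
        (minorant G mm).continuous mm 1 (Nat.cast_nonneg mm) zero_le_one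
        (fun x y => minorant_dist_le x y) (fun x => minorant_abs_le x)
    have hev : ∀ b : ℝ, b < (μ G).toReal → ∀ᶠ n in atTop, b < (μs n G).toReal :=
      fun b hb => eventually_lt_of_minorant_conv hcore hG hb
    apply le_of_forall_lt
    intro c hc
    obtain ⟨c', hc1, hc2⟩ := exists_between hc
    have hQG : ((Q G : NNReal) : ℝ) = (μ G).toReal := by
      rw [← ENNReal.coe_toReal, ProbabilityMeasure.ennreal_coeFn_eq_coeFn_toMeasure]
      rfl
    have hb' : (c' : ℝ) < (μ G).toReal := by
      rw [← hQG]
      exact_mod_cast hc2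
    have hevn : ∀ᶠ n in atTop, c' ≤ P n G := by
      filter_upwards [hev c' hb'] with n hn
      have hPG : ((P n G : NNReal) : ℝ) = (μs n G).toReal := by
        rw [← ENNReal.coe_toReal, ProbabilityMeasure.ennreal_coeFn_eq_coeFn_toMeasure]
        rfl
      rw [← NNReal.coe_le_coe, hPG]
      exact hn.le
    have hbd : IsBoundedUnder (· ≤ ·) atTop (fun n => P n G) :=
      ⟨1, by
        rw [Filter.eventually_map]
        filter_upwards with n
        exact ProbabilityMeasure.apply_le_one _ _⟩
    exact lt_of_lt_of_le hc1 (le_liminf_of_le hbd.isCoboundedUnder_ge hevn)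
  intro g
  exact ProbabilityMeasure.tendsto_iff_forall_integral_tendsto.mp hPQ g
end

section
/- Let τ ∈ (0,1). For all bounded Borel-measurable functions f, g : [0,1] → ℝ one has sup_{u ∈ [0,τ]} | (𝒯f)(u) − (𝒯g)(u) | ≤ (1 + 2 log(1/(1−τ))) · sup_{v ∈ [0,1]} | f(v) − g(v) |, where (𝒯f)(u) := f(u) − ∫₀ᵘ (f(1) − f(v))/(1 − v) dv. In particular, the innovation martingale transform, restricted to the interval [0, τ], is Lipschitz continuous with respect to the supremum norm. -/
open MeasureTheory intervalIntegral Set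

/-- The innovation martingale transform `(𝒯f)(u) := f(u) − ∫₀ᵘ (f(1) − f(v))/(1 − v) dv`. -/
noncomputable def innovationTransform (f : ℝ → ℝ) (u : ℝ) : ℝ :=
  f u - ∫ v in (0:ℝ)..u, (f 1 - f v) / (1 - v)

/-- **Lipschitz continuity of the innovation martingale transform on `[0,τ]`.**
Let `τ ∈ (0,1)`.  For all bounded Borel-measurable `f, g : [0,1] → ℝ`,
`sup_{u ∈ [0,τ]} |(𝒯f)(u) − (𝒯g)(u)| ≤ (1 + 2 log(1/(1−τ))) · sup_{v ∈ [0,1]} |f(v) − g(v)|`. -/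
theorem innovationTransform_lipschitz
    (τ : ℝ) (hτ : τ ∈ Set.Ioo (0:ℝ) 1)
    (f g : ℝ → ℝ) (hf : Measurable f) (hg : Measurable g)
    (Mf : ℝ) (hMf : ∀ v ∈ Set.Icc (0:ℝ) 1, |f v| ≤ Mf)
    (Mg : ℝ) (hMg : ∀ v ∈ Set.Icc (0:ℝ) 1, |g v| ≤ Mg) :
    ∀ u ∈ Set.Icc (0:ℝ) τ,
      |innovationTransform f u - innovationTransform g u| ≤
        (1 + 2 * Real.log (1 / (1 - τ))) *
          sSup ((fun v => |f v - g v|) '' Set.Icc (0:ℝ) 1) := by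
  obtain ⟨hτ0, hτ1⟩ := hτ
  have hτ1' : (0:ℝ) < 1 - τ := by linarith
  set S := sSup ((fun v => |f v - g v|) '' Set.Icc (0:ℝ) 1) with hSdef
  have hbdd : BddAbove ((fun v => |f v - g v|) '' Set.Icc (0:ℝ) 1) := by
    refine ⟨Mf + Mg, ?_⟩
    rintro _ ⟨v, hv, rfl⟩
    exact (abs_sub _ _).trans (add_le_add (hMf v hv) (hMg v hv))
  have hS_le : ∀ v ∈ Set.Icc (0:ℝ) 1, |f v - g v| ≤ S := fun v hv =>
    le_csSup hbdd ⟨v, hv, rfl⟩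
  have hS0 : 0 ≤ S := (abs_nonneg _).trans (hS_le 0 ⟨le_refl _, by norm_num⟩)
  intro u hu
  obtain ⟨hu0, huτ⟩ := hu
  have hu1 : u < 1 := lt_of_le_of_lt huτ hτ1
  have hu1' : (0:ℝ) < 1 - u := by linarith
  -- integrability of the kernels
  have key : ∀ (F : ℝ → ℝ), Measurable F → ∀ M : ℝ, (∀ v ∈ Set.Icc (0:ℝ) 1, |F v| ≤ M) →
      IntervalIntegrable (fun v => (F 1 - F v) / (1 - v)) volume 0 u := by
    intro F hF M hM
    rw [intervalIntegrable_iff_integrableOn_Ioc_of_le hu0]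
    apply Measure.integrableOn_of_bounded (M := (|F 1| + M) / (1 - τ))
    · exact (measure_Ioc_lt_top).ne
    · exact ((measurable_const.sub hF).div (measurable_const.sub measurable_id)).aestronglyMeasurable
    · filter_upwards [ae_restrict_mem measurableSet_Ioc] with v hv
      obtain ⟨hv0, hvu⟩ := hv
      have hv1 : (0:ℝ) < 1 - v := by linarith
      have hnum : |F 1 - F v| ≤ |F 1| + M := by
        refine (abs_sub _ _).trans (add_le_add le_rfl (hM v ⟨hv0.le, by linarith⟩))
      have : ‖(F 1 - F v) / (1 - v)‖ = |F 1 - F v| / (1 - v) := by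
        rw [Real.norm_eq_abs, abs_div, abs_of_pos hv1]
      rw [this]
      apply div_le_div₀ ((abs_nonneg _).trans hnum) hnum hτ1' (by linarith)
  have hif := key f hf Mf hMf
  have hig := key g hg Mg hMg
  -- rewrite the difference
  have hdiff : innovationTransform f u - innovationTransform g u
      = (f u - g u) - ∫ v in (0:ℝ)..u, ((f 1 - f v) - (g 1 - g v)) / (1 - v) := by
    have : (∫ v in (0:ℝ)..u, ((f 1 - f v) - (g 1 - g v)) / (1 - v))
        = (∫ v in (0:ℝ)..u, (f 1 - f v) / (1 - v)) - ∫ v in (0:ℝ)..u, (g 1 - g v) / (1 - v) := by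
      rw [← intervalIntegral.integral_sub hif hig]
      congr 1; ext v; ring
    rw [this, innovationTransform, innovationTransform]; ring
  -- bound the integral
  have hbound_int : IntervalIntegrable (fun v => 2 * S * (1 / (1 - v))) volume 0 u := by
    apply ContinuousOn.intervalIntegrable
    apply ContinuousOn.mul continuousOn_const
    apply ContinuousOn.div continuousOn_const (by fun_prop)
    intro v hv
    rw [Set.uIcc_of_le hu0] at hv
    have : v ≤ u := hv.2
    intro h; nlinarith [hv.1]
  have hIle : |∫ v in (0:ℝ)..u, ((f 1 - f v) - (g 1 - g v)) / (1 - v)|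
      ≤ |∫ v in (0:ℝ)..u, 2 * S * (1 / (1 - v))| := by
    rw [← Real.norm_eq_abs]
    apply intervalIntegral.norm_integral_le_abs_of_norm_le _ hbound_int
    filter_upwards [ae_restrict_mem measurableSet_uIoc] with v hv
    rw [Set.uIoc_of_le hu0] at hv
    obtain ⟨hv0, hvu⟩ := hv
    have hv1 : (0:ℝ) < 1 - v := by linarith
    have hnum : |(f 1 - f v) - (g 1 - g v)| ≤ 2 * S := by
      have h1 : |f 1 - g 1| ≤ S := hS_le 1 ⟨by norm_num, le_rfl⟩
      have h2 : |f v - g v| ≤ S := hS_le v ⟨hv0.le, by linarith⟩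
      calc |(f 1 - f v) - (g 1 - g v)| = |(f 1 - g 1) - (f v - g v)| := by ring_nf
        _ ≤ |f 1 - g 1| + |f v - g v| := abs_sub _ _
        _ ≤ S + S := add_le_add h1 h2
        _ = 2 * S := by ring
    have : ‖((f 1 - f v) - (g 1 - g v)) / (1 - v)‖ = |(f 1 - f v) - (g 1 - g v)| / (1 - v) := by
      rw [Real.norm_eq_abs, abs_div, abs_of_pos hv1]
    rw [this]
    rw [show 2 * S * (1 / (1 - v)) = 2 * S / (1 - v) by ring]
    apply div_le_div_of_nonneg_right hnum hv1.le |>.trans_eq rfl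
  -- compute the bounding integral
  have hcomp : (∫ v in (0:ℝ)..u, 2 * S * (1 / (1 - v))) = 2 * S * Real.log (1 / (1 - u)) := by
    rw [intervalIntegral.integral_const_mul]
    congr 1
    have h1 : (∫ v in (0:ℝ)..u, 1 / (1 - v)) = ∫ x in (1 - u)..(1 - 0), 1 / x :=
      intervalIntegral.integral_comp_sub_left (fun x => 1 / x) 1
    rw [h1]
    rw [integral_one_div]
    · rw [sub_zero, Real.log_div one_ne_zero (by positivity), Real.log_one]
    · rw [sub_zero]
      intro h
      rw [Set.mem_uIcc] at h
      rcases h with ⟨h1, _⟩ | ⟨_, h2⟩ <;> linarith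
  have hlogle : Real.log (1 / (1 - u)) ≤ Real.log (1 / (1 - τ)) := by
    apply Real.log_le_log (by positivity)
    apply one_div_le_one_div_of_le hτ1' (by linarith)
  have hlog0 : 0 ≤ Real.log (1 / (1 - τ)) := by
    apply Real.log_nonneg
    rw [le_div_iff₀ hτ1']; linarith
  -- put it together
  rw [hdiff]
  calc |(f u - g u) - ∫ v in (0:ℝ)..u, ((f 1 - f v) - (g 1 - g v)) / (1 - v)|
      ≤ |f u - g u| + |∫ v in (0:ℝ)..u, ((f 1 - f v) - (g 1 - g v)) / (1 - v)| := abs_sub _ _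
    _ ≤ S + |2 * S * Real.log (1 / (1 - u))| := by
        refine add_le_add (hS_le u ⟨hu0, hu1.le⟩) (hIle.trans ?_)
        rw [hcomp]
    _ ≤ S + 2 * S * Real.log (1 / (1 - τ)) := by
        refine add_le_add le_rfl ?_
        have hlog0' : 0 ≤ Real.log (1 / (1 - u)) := by
          apply Real.log_nonneg
          rw [le_div_iff₀ hu1']; linarith
        rw [abs_of_nonneg (by positivity)]
        have := mul_le_mul_of_nonneg_left hlogle (by positivity : (0:ℝ) ≤ 2 * S)
        linarith
    _ = (1 + 2 * Real.log (1 / (1 - τ))) * S := by ring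
end

section
/- For all real numbers s, t with 0 ≤ s ≤ t < 1, the following identity holds: s − ∫₀ᵗ (s − min(s, v))/(1 − v) dv − ∫₀ˢ (t − min(u, t))/(1 − u) du + ∫₀ˢ ( ∫₀ᵗ (1 − max(u, v))/((1 − u)(1 − v)) dv ) du = s. -/
open intervalIntegral

private lemma hasDeriv_log1m {v : ℝ} (h : v < 1) :
    HasDerivAt (fun x : ℝ => Real.log (1 - x)) (-(1 / (1 - v))) v := by
  have h1 : (1:ℝ) - v ≠ 0 := by intro h0; linarith
  have := (Real.hasDerivAt_log h1).comp v ((hasDerivAt_id v).const_sub 1)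
  exact this.congr_deriv (by simp)

private lemma intA {x : ℝ} (hx0 : 0 ≤ x) (hx1 : x < 1) :
    (∫ v in (0:ℝ)..x, 1 / (1 - v)) = -Real.log (1 - x) := by
  have h := intervalIntegral.integral_eq_sub_of_hasDerivAt
    (f := fun v : ℝ => -Real.log (1 - v)) (f' := fun v : ℝ => 1 / (1 - v))
    (a := 0) (b := x) ?_ ?_
  · simpa using h
  · intro v hv
    rw [Set.uIcc_of_le hx0] at hv
    have hv1 : v < 1 := lt_of_le_of_lt hv.2 hx1
    exact (hasDeriv_log1m hv1).neg.congr_deriv (by simp)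
  · apply ContinuousOn.intervalIntegrable
    apply ContinuousOn.div continuousOn_const (by fun_prop)
    intro v hv
    rw [Set.uIcc_of_le hx0] at hv
    intro h0
    have : v < 1 := lt_of_le_of_lt hv.2 hx1
    linarith

private lemma intB (c : ℝ) {x : ℝ} (hx0 : 0 ≤ x) (hx1 : x < 1) :
    (∫ v in (0:ℝ)..x, (c - v) / (1 - v)) = (1 - c) * Real.log (1 - x) + x := by
  have h := intervalIntegral.integral_eq_sub_of_hasDerivAt
    (f := fun v : ℝ => (1 - c) * Real.log (1 - v) + v)
    (f' := fun v : ℝ => (c - v) / (1 - v)) (a := 0) (b := x) ?_ ?_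
  · simpa using h
  · intro v hv
    rw [Set.uIcc_of_le hx0] at hv
    have hv1 : v < 1 := lt_of_le_of_lt hv.2 hx1
    have h1 : (1:ℝ) - v ≠ 0 := by intro h0; linarith
    have := (((hasDeriv_log1m hv1).const_mul (1 - c)).add (hasDerivAt_id v))
    exact this.congr_deriv (by field_simp; ring)
  · apply ContinuousOn.intervalIntegrable
    apply ContinuousOn.div (by fun_prop) (by fun_prop)
    intro v hv
    rw [Set.uIcc_of_le hx0] at hv
    intro h0
    have : v < 1 := lt_of_le_of_lt hv.2 hx1
    linarith

private lemma intC (t : ℝ) {x : ℝ} (hx0 : 0 ≤ x) (hx1 : x < 1) :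
    (∫ u in (0:ℝ)..x, (-Real.log (1 - u) + (t - u) / (1 - u)))
      = (1 - x) * Real.log (1 - x) + (1 - t) * Real.log (1 - x) + 2 * x := by
  have h := intervalIntegral.integral_eq_sub_of_hasDerivAt
    (f := fun u : ℝ => (1 - u) * Real.log (1 - u) + (1 - t) * Real.log (1 - u) + 2 * u)
    (f' := fun u : ℝ => -Real.log (1 - u) + (t - u) / (1 - u)) (a := 0) (b := x) ?_ ?_
  · simpa using h
  · intro u hu
    rw [Set.uIcc_of_le hx0] at hu
    have hu1 : u < 1 := lt_of_le_of_lt hu.2 hx1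
    have h1 : (1:ℝ) - u ≠ 0 := by intro h0; linarith
    have hd1 : HasDerivAt (fun y : ℝ => (1 - y) * Real.log (1 - y))
        ((-1) * Real.log (1 - u) + (1 - u) * (-(1 / (1 - u)))) u :=
      HasDerivAt.mul ((hasDerivAt_id u).const_sub 1) (hasDeriv_log1m hu1)
    have := (hd1.add ((hasDeriv_log1m hu1).const_mul (1 - t))).add
      ((hasDerivAt_id u).const_mul 2)
    exact this.congr_deriv (by field_simp; ring)
  · apply ContinuousOn.intervalIntegrable
    apply ContinuousOn.add
    · apply ContinuousOn.neg
      apply Real.continuousOn_log.comp (by fun_prop)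
      intro u hu
      rw [Set.uIcc_of_le hx0] at hu
      have : u < 1 := lt_of_le_of_lt hu.2 hx1
      simp only [Set.mem_compl_iff, Set.mem_singleton_iff]
      intro h0; linarith
    · apply ContinuousOn.div (by fun_prop) (by fun_prop)
      intro u hu
      rw [Set.uIcc_of_le hx0] at hu
      intro h0
      have : u < 1 := lt_of_le_of_lt hu.2 hx1
      linarith

/-- **Covariance identity for the innovation martingale transform.**
For all real numbers `0 ≤ s ≤ t < 1`,
`s − ∫₀ᵗ (s − min(s,v))/(1−v) dv − ∫₀ˢ (t − min(u,t))/(1−u) du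
  + ∫₀ˢ ∫₀ᵗ (1 − max(u,v))/((1−u)(1−v)) dv du = s`. -/
theorem innovation_transform_covariance_identity
    (s t : ℝ) (hs : 0 ≤ s) (hst : s ≤ t) (ht : t < 1) :
    s - (∫ v in (0:ℝ)..t, (s - min s v) / (1 - v))
      - (∫ u in (0:ℝ)..s, (t - min u t) / (1 - u))
      + (∫ u in (0:ℝ)..s, ∫ v in (0:ℝ)..t,
          (1 - max u v) / ((1 - u) * (1 - v))) = s := by
  have hs1 : s < 1 := lt_of_le_of_lt hst ht
  -- integrability of the first integrand on subintervals of [0,t]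
  have hint : ∀ a b : ℝ, a ≤ b → b < 1 →
      IntervalIntegrable (fun v => (s - min s v) / (1 - v)) MeasureTheory.volume a b := by
    intro a b hab hb1
    apply ContinuousOn.intervalIntegrable
    apply ContinuousOn.div (by fun_prop) (by fun_prop)
    intro v hv
    rw [Set.uIcc_of_le hab] at hv
    intro h0
    have : v < 1 := lt_of_le_of_lt hv.2 hb1
    linarith
  -- first integral
  have h1 : (∫ v in (0:ℝ)..t, (s - min s v) / (1 - v))
      = (1 - s) * Real.log (1 - s) + s := by
    have hsplit := integral_add_adjacent_intervals (hint 0 s hs hs1) (hint s t hst ht)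
    have h1a : (∫ v in (0:ℝ)..s, (s - min s v) / (1 - v))
        = (1 - s) * Real.log (1 - s) + s := by
      rw [intervalIntegral.integral_congr (g := fun v => (s - v) / (1 - v)) ?_]
      · exact intB s hs hs1
      · intro v hv
        rw [Set.uIcc_of_le hs] at hv
        simp [min_eq_right hv.2]
    have h1b : (∫ v in s..t, (s - min s v) / (1 - v)) = 0 := by
      rw [intervalIntegral.integral_congr (g := fun _ => (0:ℝ)) ?_]
      · simp
      · intro v hv
        rw [Set.uIcc_of_le hst] at hv
        simp [min_eq_left hv.1]
    rw [← hsplit, h1a, h1b, add_zero]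
  -- second integral
  have h2 : (∫ u in (0:ℝ)..s, (t - min u t) / (1 - u))
      = (1 - t) * Real.log (1 - s) + s := by
    rw [intervalIntegral.integral_congr (g := fun u => (t - u) / (1 - u)) ?_]
    · exact intB t hs hs1
    · intro u hu
      rw [Set.uIcc_of_le hs] at hu
      simp [min_eq_left (le_trans hu.2 hst)]
  -- double integral
  have h3 : (∫ u in (0:ℝ)..s, ∫ v in (0:ℝ)..t, (1 - max u v) / ((1 - u) * (1 - v)))
      = (1 - s) * Real.log (1 - s) + (1 - t) * Real.log (1 - s) + 2 * s := by
    rw [intervalIntegral.integral_congr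
      (g := fun u => -Real.log (1 - u) + (t - u) / (1 - u)) ?_]
    · exact intC t hs hs1
    · intro u hu
      rw [Set.uIcc_of_le hs] at hu
      obtain ⟨hu0, hus⟩ := hu
      have hut : u ≤ t := le_trans hus hst
      have hu1 : u < 1 := lt_of_le_of_lt hus hs1
      have h1u : (1:ℝ) - u ≠ 0 := by intro h0; linarith
      have hintin : ∀ a b : ℝ, a ≤ b → b < 1 →
          IntervalIntegrable (fun v => (1 - max u v) / ((1 - u) * (1 - v)))
            MeasureTheory.volume a b := by
        intro a b hab hb1
        apply ContinuousOn.intervalIntegrable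
        apply ContinuousOn.div (by fun_prop) (by fun_prop)
        intro v hv
        rw [Set.uIcc_of_le hab] at hv
        intro h0
        have hv1 : v < 1 := lt_of_le_of_lt hv.2 hb1
        have : (1:ℝ) - v ≠ 0 := by intro h; linarith
        exact this (by
          rcases mul_eq_zero.mp h0 with h | h
          · exact absurd h h1u
          · exact h)
      have hsplit := integral_add_adjacent_intervals (hintin 0 u hu0 hu1) (hintin u t hut ht)
      have hA : (∫ v in (0:ℝ)..u, (1 - max u v) / ((1 - u) * (1 - v)))
          = -Real.log (1 - u) := by
        rw [intervalIntegral.integral_congr (g := fun v => 1 / (1 - v)) ?_]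
        · exact intA hu0 hu1
        · intro v hv
          rw [Set.uIcc_of_le hu0] at hv
          simp only [max_eq_left hv.2]
          have hv1 : (1:ℝ) - v ≠ 0 := by
            have : v < 1 := lt_of_le_of_lt hv.2 hu1
            intro h; linarith
          field_simp
      have hB : (∫ v in u..t, (1 - max u v) / ((1 - u) * (1 - v)))
          = (t - u) / (1 - u) := by
        rw [intervalIntegral.integral_congr (g := fun _ => 1 / (1 - u)) ?_]
        · rw [intervalIntegral.integral_const, smul_eq_mul]
          ring
        · intro v hv
          rw [Set.uIcc_of_le hut] at hv
          simp only [max_eq_right hv.1]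
          have hv1 : (1:ℝ) - v ≠ 0 := by
            have : v < 1 := lt_of_le_of_lt hv.2 ht
            intro h; linarith
          field_simp
      simp only [← hsplit, hA, hB]
  rw [h1, h2, h3]
  ring
end
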